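/- Let n ≥ 2, k, q ≥ 1, and r ≥ s ≥ 1 be integers with gcd(n, k−1, q) = 1, and suppose that q(r−s) ≡ 2(k−1) (mod n) (i.e., P(r,n,k,s,q) is of type Z). Then P(r,n,k,s,q) is the trivial group if and only if |r−s| = 1 and either k ≡ 1 (mod n) or k ≡ 1 + q(r−s) (mod n). -/

import Mathlib

/-- The `j`-th cyclic shift of a word in the free group on `ZMod n`:
the image of `w` under the automorphism `θ^j` with `θ(x_i) = x_{i+1}`. -/
def cycWord (n : ℕ) (j : ℕ) (w : FreeGroup (ZMod n)) : FreeGroup (ZMod n) :=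
  FreeGroup.map (fun i => i + (j : ZMod n)) w

/-- The relators `θ^j(w)`, `0 ≤ j < n`, of the cyclic presentation `P_n(w)`. -/
def cycRelators (n : ℕ) (w : FreeGroup (ZMod n)) : Set (FreeGroup (ZMod n)) :=
  {u | ∃ j < n, u = cycWord n j w}

/-- The cyclically presented group `G_n(w)`. -/
def Gn (n : ℕ) (w : FreeGroup (ZMod n)) : Type := PresentedGroup (cycRelators n w)

instance (n : ℕ) (w : FreeGroup (ZMod n)) : Group (Gn n w) :=
  inferInstanceAs (Group (PresentedGroup (cycRelators n w)))

/-- The defining word of the Prishchepov group: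
`w = (x_0 x_q ⋯ x_{(r-1)q}) (x_{k-1} x_{k-1+q} ⋯ x_{k-1+(s-1)q})⁻¹`, indices mod `n`. -/
def Pword (r n k s q : ℕ) : FreeGroup (ZMod n) :=
  ((List.range r).map (fun i => FreeGroup.of ((i * q : ℕ) : ZMod n))).prod *
  (((List.range s).map (fun i => FreeGroup.of (((k - 1) + i * q : ℕ) : ZMod n))).prod)⁻¹

/-- The Prishchepov group `P(r,n,k,s,q)`. -/
def Pgroup (r n k s q : ℕ) : Type := Gn n (Pword r n k s q)

instance (r n k s q : ℕ) : Group (Pgroup r n k s q) :=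
  inferInstanceAs (Group (Gn n (Pword r n k s q)))

lemma not_subsingleton_of_rep (r n k s q : ℕ) {Q : Type*} [Group Q] (f : ZMod n → Q)
    (hrel : ∀ j : ZMod n,
      ((List.range r).map (fun i => f (((i * q : ℕ) : ZMod n) + j))).prod =
      ((List.range s).map (fun i => f ((((k - 1) + i * q : ℕ) : ZMod n) + j))).prod)
    (i0 : ZMod n) (hne : f i0 ≠ 1) : ¬ Subsingleton (Pgroup r n k s q) := by
  intro h
  have h' : Subsingleton (PresentedGroup (cycRelators n (Pword r n k s q))) := h
  have hlift : ∀ u ∈ cycRelators n (Pword r n k s q), FreeGroup.lift f u = 1 := by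
    rintro u ⟨j, hjn, rfl⟩
    have hcomp : ∀ v, FreeGroup.lift f (FreeGroup.map (fun i : ZMod n => i + (j : ZMod n)) v)
        = FreeGroup.lift (fun i => f (i + (j : ZMod n))) v := by
      intro v
      have heq : (FreeGroup.lift f).comp (FreeGroup.map (fun i : ZMod n => i + (j : ZMod n)))
          = FreeGroup.lift (fun i => f (i + (j : ZMod n))) := by
        ext x
        simp
      exact DFunLike.congr_fun heq v
    unfold cycWord Pword
    rw [hcomp, map_mul, map_inv, mul_inv_eq_one]
    rw [map_list_prod, map_list_prod, List.map_map, List.map_map]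
    simpa [Function.comp_def] using hrel (j : ZMod n)
  have key : PresentedGroup.toGroup hlift (PresentedGroup.of i0) = f i0 :=
    PresentedGroup.toGroup.of hlift
  rw [Subsingleton.elim (PresentedGroup.of i0) 1, map_one] at key
  exact hne key.symm

lemma case_diff_ne_one (r n k s q : ℕ) (hrs : s ≤ r) (hd : r - s ≠ 1) :
    ¬ Subsingleton (Pgroup r n k s q) := by
  apply not_subsingleton_of_rep r n k s q
    (fun _ => (Multiplicative.ofAdd (1 : ZMod (r - s)))) ?_ 0 ?_
  · intro j
    have hconst : ∀ (m : ℕ) (g : ℕ → ZMod n),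
        ((List.range m).map (fun i => (fun (_ : ZMod n) =>
          Multiplicative.ofAdd (1 : ZMod (r - s))) (g i))).prod
        = Multiplicative.ofAdd ((m : ZMod (r - s))) := by
      intro m g
      induction m with
      | zero => simp
      | succ m ih =>
          rw [List.range_succ, List.map_append, List.prod_append]
          simp only [List.map_cons, List.map_nil, List.prod_cons, List.prod_nil, mul_one, ih]
          rw [← ofAdd_add]
          congr 1
          push_cast
          ring
    rw [hconst r (fun i => ((i * q : ℕ) : ZMod n) + j)]
    rw [hconst s (fun i => (((k - 1) + i * q : ℕ) : ZMod n) + j)]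
    congr 1
    have : (r : ZMod (r - s)) = ((s + (r - s) : ℕ) : ZMod (r - s)) := by
      congr 1; omega
    rw [this]
    push_cast
    simp [ZMod.natCast_self]
  · intro hX
    have h1 : ((1 : ℕ) : ZMod (r - s)) = 0 := by
      have := congrArg Multiplicative.toAdd hX
      simpa using this
    have h2 : (r - s) ∣ 1 := (ZMod.natCast_eq_zero_iff ..).mp h1
    exact hd (Nat.dvd_one.mp h2)


section Aux
variable {Q : Type*} [Group Q]

lemma pow_congr_of_pow_eq_one {n : ℕ} {T : Q} (hT : T ^ n = 1) {a b : ℕ}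
    (h : a ≡ b [MOD n]) : T ^ a = T ^ b := by
  have key : ∀ m : ℕ, T ^ m = T ^ (m % n) := by
    intro m
    conv_lhs => rw [← Nat.div_add_mod m n, pow_add, pow_mul, hT, one_pow, one_mul]
  rw [key a, key b, h]

lemma zpow_val_add {n : ℕ} [NeZero n] {T : Q} (hT : T ^ n = 1) (a b : ZMod n) :
    T ^ (a + b).val = T ^ a.val * T ^ b.val := by
  rw [← pow_add]
  exact pow_congr_of_pow_eq_one hT (by rw [ZMod.val_add]; exact Nat.mod_modEq _ _)

lemma pow_val_natmul {n : ℕ} [NeZero n] {T : Q} (hT : T ^ n = 1) (m a : ℕ) :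
    T ^ (((m * a : ℕ) : ZMod n)).val = (T ^ (((a : ℕ) : ZMod n)).val) ^ m := by
  induction m with
  | zero => simp
  | succ m ih =>
      have : ((((m + 1) * a : ℕ) : ZMod n)) = (((m * a : ℕ) : ZMod n)) + ((a : ℕ) : ZMod n) := by
        push_cast; ring
      rw [this, zpow_val_add hT, ih, pow_succ]

/-- telescoping product -/
lemma tele {n q : ℕ} [NeZero n] {T X : Q} (hT : T ^ n = 1) (c : ZMod n) (m : ℕ) :
    ((List.range m).map (fun i => T ^ (((i * q : ℕ) : ZMod n) + c).val * X *
        (T ^ (((i * q : ℕ) : ZMod n) + c).val)⁻¹)).prod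
      = T ^ c.val * (X * T ^ ((q : ZMod n)).val) ^ m *
        ((T ^ ((q : ZMod n)).val) ^ m)⁻¹ * (T ^ c.val)⁻¹ := by
  induction m with
  | zero => simp
  | succ m ih =>
      rw [List.range_succ, List.map_append, List.prod_append, ih]
      have harg : T ^ (((m * q : ℕ) : ZMod n) + c).val
          = (T ^ ((q : ZMod n)).val) ^ m * T ^ c.val := by
        rw [zpow_val_add hT, pow_val_natmul hT]
      have hcomm : (T ^ ((q : ZMod n)).val) ^ m * T ^ c.val
          = T ^ c.val * (T ^ ((q : ZMod n)).val) ^ m :=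
        (((Commute.refl T).pow_pow _ _).pow_left m).eq
      simp only [List.map_cons, List.map_nil, List.prod_cons, List.prod_nil, mul_one, harg,
        hcomm, pow_succ]
      group
end Aux

section Key
variable {Q : Type*} [Group Q]

lemma key_rel {n k q s : ℕ} [NeZero n] {T X : Q} (hT : T ^ n = 1)
    (hq : ((q : ℕ) : ZMod n) = ((k - 1 : ℕ) : ZMod n) + ((k - 1 : ℕ) : ZMod n))
    (hZ : (X * T ^ ((q : ZMod n)).val) ^ (s + 1)
        = T ^ (((k - 1 : ℕ) : ZMod n)).val * (X * T ^ ((q : ZMod n)).val) ^ s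
          * T ^ (((k - 1 : ℕ) : ZMod n)).val)
    (j : ZMod n) :
    ((List.range (s + 1)).map (fun i => T ^ (((i * q : ℕ) : ZMod n) + j).val * X *
        (T ^ (((i * q : ℕ) : ZMod n) + j).val)⁻¹)).prod
      = ((List.range s).map (fun i => T ^ ((((k - 1) + i * q : ℕ) : ZMod n) + j).val * X *
        (T ^ ((((k - 1) + i * q : ℕ) : ZMod n) + j).val)⁻¹)).prod := by
  have hcast : ∀ i : ℕ, (((((k - 1) + i * q : ℕ) : ZMod n) + j))
      = (((i * q : ℕ) : ZMod n) + (((k - 1 : ℕ) : ZMod n) + j)) := by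
    intro i; push_cast; ring
  simp only [hcast]
  rw [tele hT, tele hT, hZ]
  have hdj : T ^ ((((k - 1 : ℕ) : ZMod n)) + j).val
      = T ^ (((k - 1 : ℕ) : ZMod n)).val * T ^ j.val := zpow_val_add hT _ j
  have hW : T ^ ((q : ZMod n)).val = (T ^ (((k - 1 : ℕ) : ZMod n)).val) ^ 2 := by
    rw [hq, zpow_val_add hT, sq]
  rw [hdj, hW]
  have hMJ : T ^ (((k - 1 : ℕ) : ZMod n)).val * T ^ j.val
      = T ^ j.val * T ^ (((k - 1 : ℕ) : ZMod n)).val := ((Commute.refl T).pow_pow _ _).eq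
  rw [hMJ]
  group

end Key


open DihedralGroup in
lemma case_even (n k q s : ℕ) (hn : 2 ≤ n) (hs : 1 ≤ s) (heven : 2 ∣ n)
    (hkodd : ¬ 2 ∣ (k - 1))
    (hq : ((q : ℕ) : ZMod n) = ((k - 1 : ℕ) : ZMod n) + ((k - 1 : ℕ) : ZMod n)) :
    ¬ Subsingleton (Pgroup (s + 1) n k s q) := by
  haveI : NeZero n := ⟨by omega⟩
  set T : DihedralGroup (2 * s + 1) := sr 0 with hTdef
  set X : DihedralGroup (2 * s + 1) := r 1 with hXdef
  have hT2 : T ^ 2 = 1 := by rw [sq, hTdef, sr_mul_self]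
  have hT : T ^ n = 1 := by
    obtain ⟨m, hm⟩ := heven
    rw [hm, pow_mul, hT2, one_pow]
  have hdodd : ¬ 2 ∣ (((k - 1 : ℕ) : ZMod n)).val := by
    rw [ZMod.val_natCast]
    have h := Nat.mod_add_div (k - 1) n
    have h2 : 2 ∣ n * ((k - 1) / n) := heven.mul_right _
    omega
  have hTd : T ^ (((k - 1 : ℕ) : ZMod n)).val = T := by
    obtain ⟨j, hj⟩ : ∃ j, (((k - 1 : ℕ) : ZMod n)).val = 2 * j + 1 := by
      rcases Nat.even_or_odd ((((k - 1 : ℕ) : ZMod n)).val) with he | ho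
      · exact absurd he.two_dvd hdodd
      · obtain ⟨j, hj⟩ := ho; exact ⟨j, by omega⟩
    rw [hj, pow_succ, pow_mul, hT2, one_pow, one_mul]
  have hTq : T ^ (((q : ℕ) : ZMod n)).val = 1 := by
    rw [hq, zpow_val_add hT, hTd, ← sq, hT2]
  apply not_subsingleton_of_rep (s + 1) n k s q
    (fun i => T ^ i.val * X * (T ^ i.val)⁻¹) ?_ 0 ?_
  · intro j
    apply key_rel hT hq
    rw [hTq, hTd, mul_one, hTdef, hXdef, r_one_pow, r_one_pow, sr_mul_r, sr_mul_sr]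
    congr 1
    have h0 : ((2 * s + 1 : ℕ) : ZMod (2 * s + 1)) = 0 := ZMod.natCast_self _
    push_cast at h0 ⊢
    linear_combination h0
  · haveI : Fact (1 < 2 * s + 1) := ⟨by omega⟩
    simp only [ZMod.val_zero, pow_zero, one_mul, inv_one, mul_one]
    rw [hXdef, DihedralGroup.one_def]
    simp only [ne_eq, DihedralGroup.r.injEq]
    exact one_ne_zero

section
open Complex
lemma pow_M (x y z : ℂ) (hy : y = x * z - 1) (A : ℕ → ℂ) (h0 : A 0 = 0) (h1 : A 1 = 1)
    (hrec : ∀ m, A (m + 2) = (x + z) * A (m + 1) - A m) :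
    ∀ m, (!![x, y; 1, z]) ^ (m + 1)
      = !![A (m + 1) * x - A m, A (m + 1) * y; A (m + 1), A (m + 1) * z - A m] := by
  intro m
  induction m with
  | zero => rw [pow_one, h0, h1]; norm_num
  | succ m ih =>
      rw [pow_succ, ih, Matrix.mul_fin_two]
      simp only [show m + 1 + 1 = m + 2 from rfl, hrec m, hy]
      ext i j
      fin_cases i <;> fin_cases j <;> simp <;> ring

lemma odd_setup (n s : ℕ) (hn : 3 ≤ n) (hodd : ¬ 2 ∣ n) (hs : 1 ≤ s) :
    ∃ M Z : Matrix (Fin 2) (Fin 2) ℂ,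
      (∃ Mi, M * Mi = 1 ∧ Mi * M = 1) ∧ (∃ Zi, Z * Zi = 1 ∧ Zi * Z = 1) ∧
      M ^ n = 1 ∧ Z ^ (s + 1) = M * Z ^ s * M ∧ M * M ≠ Z := by
  -- the roots of unity
  set μ : ℂ := Complex.exp (Real.pi * I / (2 * s + 1)) with hμdef
  set ζ : ℂ := Complex.exp (2 * Real.pi * I / n) with hζdef
  have hμ0 : μ ≠ 0 := Complex.exp_ne_zero _
  have hζ0 : ζ ≠ 0 := Complex.exp_ne_zero _
  have hn0 : (n : ℂ) ≠ 0 := by exact_mod_cast (by omega : n ≠ 0)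
  have hπI : (Real.pi : ℂ) * I ≠ 0 := by simp [Real.pi_ne_zero, I_ne_zero]
  have hs1ne : (2 * (s:ℂ) + 1) ≠ 0 := by
    have h : (0:ℝ) < 2 * (s:ℝ) + 1 := by positivity
    exact_mod_cast h.ne'
  have hμ1 : μ ^ (2 * s + 1) = -1 := by
    rw [hμdef, ← Complex.exp_nat_mul]
    rw [show ((2 * s + 1 : ℕ) : ℂ) * (Real.pi * I / (2 * s + 1)) = Real.pi * I by
      push_cast; field_simp]
    exact Complex.exp_pi_mul_I
  have hμ2s : μ ^ (2 * s) ≠ 1 := by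
    rw [hμdef, ← Complex.exp_nat_mul, Ne, Complex.exp_eq_one_iff]
    rintro ⟨m, hm⟩
    have h1 : (2*(s:ℂ)) * (Real.pi * I) = (2*(m:ℂ)*(2*(s:ℂ)+1)) * (Real.pi * I) := by
      field_simp at hm
      push_cast at hm
      linear_combination (↑Real.pi * I) * hm
    have h2 : (2*(s:ℂ)) = 2*(m:ℂ)*(2*(s:ℂ)+1) := mul_right_cancel₀ hπI h1
    have h3 : (2*(s:ℤ)) = 2*m*(2*(s:ℤ)+1) := by exact_mod_cast h2
    rcases le_or_gt m 0 with h | h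
    · nlinarith
    · nlinarith
  have hζn : ζ ^ n = 1 := by
    rw [hζdef, ← Complex.exp_nat_mul]
    rw [show ((n : ℕ) : ℂ) * (2 * Real.pi * I / n) = 2 * Real.pi * I by field_simp]
    exact Complex.exp_two_pi_mul_I
  have hζ2 : ζ ^ 2 ≠ 1 := by
    rw [hζdef, ← Complex.exp_nat_mul, Ne, Complex.exp_eq_one_iff]
    rintro ⟨m, hm⟩
    have h1 : (2:ℂ) * (Real.pi * I) = ((m:ℂ) * n) * (Real.pi * I) := by
      field_simp at hm
      push_cast at hm
      linear_combination (↑Real.pi * I) * hm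
    have h2 : (2:ℂ) = (m:ℂ) * n := mul_right_cancel₀ hπI h1
    have h3 : (2:ℤ) = m * n := by exact_mod_cast h2
    have h4 : (n:ℤ) ∣ 2 := Dvd.intro_left m h3.symm
    have h5 : (n:ℤ) ≤ 2 := Int.le_of_dvd (by norm_num) h4
    omega
  have hδ : ζ - ζ⁻¹ ≠ 0 := by
    intro h
    apply hζ2
    have h' : ζ = ζ⁻¹ := sub_eq_zero.mp h
    rw [sq]
    nth_rewrite 2 [h']
    exact mul_inv_cancel₀ hζ0
  have hτ0 : ζ + ζ⁻¹ ≠ 0 := by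
    intro h
    have h' : ζ ^ 2 = -1 := by
      have h1 : ζ = -ζ⁻¹ := by linear_combination h
      rw [sq]
      nth_rewrite 2 [h1]
      rw [mul_neg, mul_inv_cancel₀ hζ0]
    have h2 : (ζ ^ 2) ^ n = -1 := by
      obtain ⟨m, hm⟩ := Nat.odd_iff.mpr (by omega : n % 2 = 1)
      rw [h', hm, pow_add, pow_mul, pow_one]
      norm_num
    rw [← pow_mul, mul_comm 2 n, pow_mul, hζn, one_pow] at h2
    norm_num at h2
  -- now the matrices
  have hνne : (1 : ℂ) - μ ^ (2*s) ≠ 0 := sub_ne_zero.mpr (Ne.symm hμ2s)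
  have hu : ζ * ζ⁻¹ = 1 := mul_inv_cancel₀ hζ0
  obtain ⟨x, hxz⟩ : ∃ x : ℂ, x + -(x * μ ^ (2*s)) = ζ + ζ⁻¹ :=
    ⟨(ζ + ζ⁻¹) / (1 - μ ^ (2*s)), by field_simp; ring⟩
  set A : ℕ → ℂ := fun m => (ζ^m - ζ⁻¹^m)/(ζ - ζ⁻¹) with hAdef
  have hA0 : A 0 = 0 := by simp [hAdef]
  have hA1 : A 1 = 1 := by simp [hAdef]; exact hδ
  have hArec : ∀ m, A (m + 2) = (x + -(x * μ ^ (2*s))) * A (m + 1) - A m := by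
    intro m
    rw [hxz]
    simp only [hAdef]
    rw [← mul_div_assoc, div_sub_div_same]
    congr 1
    linear_combination -(ζ ^ m - ζ⁻¹ ^ m) * hu
  refine ⟨!![x, x * -(x * μ ^ (2*s)) - 1; 1, -(x * μ ^ (2*s))], !![μ, 0; 0, μ⁻¹],
    ⟨!![-(x * μ ^ (2*s)), -(x * -(x * μ ^ (2*s)) - 1); -1, x], ?_, ?_⟩,
    ⟨!![μ⁻¹, 0; 0, μ], ?_, ?_⟩, ?_, ?_, ?_⟩
  · rw [Matrix.mul_fin_two, Matrix.one_fin_two]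
    ext i j; fin_cases i <;> fin_cases j <;> simp <;> ring
  · rw [Matrix.mul_fin_two, Matrix.one_fin_two]
    ext i j; fin_cases i <;> fin_cases j <;> simp <;> ring
  · rw [Matrix.mul_fin_two, Matrix.one_fin_two]
    ext i j; fin_cases i <;> fin_cases j <;>
      simp [mul_inv_cancel₀ hμ0, inv_mul_cancel₀ hμ0]
  · rw [Matrix.mul_fin_two, Matrix.one_fin_two]
    ext i j; fin_cases i <;> fin_cases j <;>
      simp [mul_inv_cancel₀ hμ0, inv_mul_cancel₀ hμ0]
  · -- M ^ n = 1
    obtain ⟨n', rfl⟩ : ∃ n', n = n' + 1 := ⟨n - 1, by omega⟩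
    rw [pow_M _ _ _ rfl A hA0 hA1 hArec n']
    have hAn : A (n' + 1) = 0 := by
      rw [hAdef]
      simp only []
      rw [hζn, inv_pow, hζn, inv_one, sub_self, zero_div]
    have hAn' : A n' = -1 := by
      have hz1 : ζ ^ n' = ζ⁻¹ := by
        have : ζ ^ n' * ζ = 1 := by rw [← pow_succ, hζn]
        field_simp at this ⊢
        linear_combination this
      rw [hAdef]
      simp only []
      rw [inv_pow, hz1, inv_inv, ← neg_sub, neg_div, div_self hδ]
    rw [hAn, hAn', Matrix.one_fin_two]
    norm_num
  · -- Z relation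
    have hZpow : ∀ m, (!![μ, 0; 0, μ⁻¹] : Matrix (Fin 2) (Fin 2) ℂ) ^ m
        = !![μ^m, 0; 0, μ⁻¹^m] := by
      intro m
      induction m with
      | zero => rw [pow_zero, Matrix.one_fin_two]; norm_num
      | succ m ih =>
          rw [pow_succ, ih, Matrix.mul_fin_two]
          ext i j; fin_cases i <;> fin_cases j <;> simp <;> ring
    have hss : μ^s * μ^(s+1) = -1 := by
      rw [← pow_add, show s + (s+1) = 2*s+1 by omega]; exact hμ1
    have hinv1 : μ⁻¹ ^ s = -(μ^(s+1)) := by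
      rw [inv_pow]
      refine inv_eq_of_mul_eq_one_left ?_
      linear_combination -hss
    have hinv2 : μ⁻¹ ^ (s+1) = -(μ^s) := by
      rw [inv_pow]
      refine inv_eq_of_mul_eq_one_left ?_
      linear_combination -hss
    rw [hZpow, hZpow, Matrix.mul_fin_two, Matrix.mul_fin_two, hinv1, hinv2]
    ext i j; fin_cases i <;> fin_cases j <;> simp
    · linear_combination (-(x^2 * μ^s)) * hμ1
    · linear_combination (x*μ^s + x^3*μ^(3*s)) * hμ1
    · linear_combination (-(x * μ^s)) * hμ1
    · linear_combination (x^2 * μ^(3*s)) * hμ1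
  · -- M * M ≠ Z
    intro h
    have h10 := congrFun (congrFun h 1) 0
    rw [Matrix.mul_fin_two] at h10
    simp at h10
    apply hτ0
    rw [← hxz]
    linear_combination h10


end

lemma case_odd (n k q s : ℕ) (hn : 3 ≤ n) (hodd : ¬ 2 ∣ n) (hs : 1 ≤ s)
    (hcop : Nat.gcd (k - 1) n = 1)
    (hq : ((q : ℕ) : ZMod n) = ((k - 1 : ℕ) : ZMod n) + ((k - 1 : ℕ) : ZMod n)) :
    ¬ Subsingleton (Pgroup (s + 1) n k s q) := by
  haveI : NeZero n := ⟨by omega⟩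
  obtain ⟨M, Z, ⟨Mi, hMMi, hMiM⟩, ⟨Zi, hZZi, hZiZ⟩, hMn, hrel, hMMZ⟩ :=
    odd_setup n s hn hodd hs
  set MU : (Matrix (Fin 2) (Fin 2) ℂ)ˣ := ⟨M, Mi, hMMi, hMiM⟩ with hMU
  set ZU : (Matrix (Fin 2) (Fin 2) ℂ)ˣ := ⟨Z, Zi, hZZi, hZiZ⟩ with hZU
  have hMUn : MU ^ n = 1 := by
    apply Units.ext
    rw [Units.val_pow_eq_pow_val, Units.val_one]
    exact hMn
  have hu : IsUnit (((k - 1 : ℕ) : ZMod n)) := (ZMod.isUnit_iff_coprime _ _).mpr hcop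
  set c := ((((k - 1 : ℕ) : ZMod n))⁻¹).val with hc
  have hcd : (c * (((k - 1 : ℕ) : ZMod n)).val) ≡ 1 [MOD n] := by
    have hcast : ((c * (((k - 1 : ℕ) : ZMod n)).val : ℕ) : ZMod n) = ((1 : ℕ) : ZMod n) := by
      push_cast
      rw [hc, ZMod.natCast_rightInverse _, ZMod.natCast_rightInverse _,
        ZMod.inv_mul_of_unit _ hu]
    exact (ZMod.natCast_eq_natCast_iff _ _ _).mp hcast
  set T : (Matrix (Fin 2) (Fin 2) ℂ)ˣ := MU ^ c with hTdef
  have hT : T ^ n = 1 := by rw [hTdef, ← pow_mul, mul_comm, pow_mul, hMUn, one_pow]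
  have hTd : T ^ (((k - 1 : ℕ) : ZMod n)).val = MU := by
    rw [hTdef, ← pow_mul, pow_congr_of_pow_eq_one hMUn hcd, pow_one]
  set X : (Matrix (Fin 2) (Fin 2) ℂ)ˣ := ZU * MU⁻¹ * MU⁻¹ with hX
  apply not_subsingleton_of_rep (s + 1) n k s q
    (fun i => T ^ i.val * X * (T ^ i.val)⁻¹) ?_ 0 ?_
  · intro j
    apply key_rel hT hq
    have hTq : T ^ (((q : ℕ) : ZMod n)).val = MU * MU := by
      rw [hq, zpow_val_add hT, hTd]
    rw [hTq, hTd]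
    have hXM : X * (MU * MU) = ZU := by rw [hX]; group
    rw [hXM]
    apply Units.ext
    simp only [Units.val_mul, Units.val_pow_eq_pow_val]
    exact hrel
  · simp only [ZMod.val_zero, pow_zero, one_mul, inv_one, mul_one]
    intro hXeq
    apply hMMZ
    have h2 : ZU = MU * MU := by
      have h3 : ZU * MU⁻¹ * MU⁻¹ * (MU * MU) = 1 * (MU * MU) := by rw [← hX, hXeq]
      rw [one_mul] at h3
      rw [← h3]
      group
    have h4 := congrArg Units.val h2
    simpa using h4.symm


/-- (Corollary D of [MR4315549].) For `n ≥ 2`, `k, q ≥ 1`, `r ≥ s ≥ 1` with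
`gcd(n, k-1, q) = 1`, if `P(r,n,k,s,q)` is of type `Z` (i.e. `q(r-s) ≡ 2(k-1) mod n`), then
`P(r,n,k,s,q)` is trivial iff `|r-s| = 1` and either `k ≡ 1` or `k ≡ 1 + q(r-s)` mod `n`. -/
theorem stmt_11 (n k q r s : ℕ) (hn : 2 ≤ n) (hk : 1 ≤ k) (hq : 1 ≤ q) (hs : 1 ≤ s)
    (hrs : s ≤ r) (hgcd : Nat.gcd n (Nat.gcd (k - 1) q) = 1)
    (htype : (q * (r - s) : ℤ) ≡ 2 * (k - 1) [ZMOD (n : ℤ)]) :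
    Subsingleton (Pgroup r n k s q) ↔
      (|(r : ℤ) - s| = 1 ∧
        ((k : ℤ) ≡ 1 [ZMOD (n : ℤ)] ∨ (k : ℤ) ≡ 1 + q * (r - s) [ZMOD (n : ℤ)])) := by
  haveI : NeZero n := ⟨by omega⟩
  have hkc : ((k - 1 : ℕ) : ℤ) = (k : ℤ) - 1 := by
    push_cast [hk]; ring
  apply iff_of_false
  · -- the group is never trivial
    rcases eq_or_ne (r - s) 1 with he | he
    · -- r = s + 1
      have hr : r = s + 1 := by omega
      subst hr
      have hrs1 : ((s + 1 : ℕ) : ℤ) - (s : ℤ) = 1 := by push_cast; ring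
      have htype' : (q : ℤ) ≡ 2 * ((k : ℤ) - 1) [ZMOD (n : ℤ)] := by
        have := htype
        rw [hrs1, mul_one] at this
        exact this
      -- divisibility: n ∣ 2(k-1) - q over ℤ
      have hdvd : (n : ℤ) ∣ 2 * ((k : ℤ) - 1) - q := htype'.dvd
      -- gcd n (k-1) = 1
      have hg : Nat.gcd n (k - 1) = 1 := by
        have h1 : (↑(Nat.gcd n (k - 1)) : ℤ) ∣ (q : ℤ) := by
          obtain ⟨b, hb⟩ := hdvd
          have h2 : (↑(Nat.gcd n (k - 1)) : ℤ) ∣ ((k : ℤ) - 1) := by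
            rw [← hkc]
            exact Int.natCast_dvd_natCast.mpr (Nat.gcd_dvd_right _ _)
          have h3 : (↑(Nat.gcd n (k - 1)) : ℤ) ∣ (n : ℤ) :=
            Int.natCast_dvd_natCast.mpr (Nat.gcd_dvd_left _ _)
          obtain ⟨a, ha⟩ := h2
          obtain ⟨c, hc⟩ := h3
          refine ⟨2 * a - c * b, ?_⟩
          rw [hc, ha] at hb
          linear_combination -hb
        have h4 : Nat.gcd n (k - 1) ∣ q := Int.natCast_dvd_natCast.mp h1
        have h5 : Nat.gcd n (k - 1) ∣ Nat.gcd n (Nat.gcd (k - 1) q) :=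
          Nat.dvd_gcd (Nat.gcd_dvd_left _ _) (Nat.dvd_gcd (Nat.gcd_dvd_right _ _) h4)
        rw [hgcd] at h5
        exact Nat.dvd_one.mp h5
      have hq2 : ((q : ℕ) : ZMod n) = ((k - 1 : ℕ) : ZMod n) + ((k - 1 : ℕ) : ZMod n) := by
        have h1 : ((q : ℤ) : ZMod n) = ((2 * ((k : ℤ) - 1) : ℤ) : ZMod n) :=
          (ZMod.intCast_eq_intCast_iff _ _ _).mpr htype'
        push_cast at h1
        have h2 : ((k - 1 : ℕ) : ZMod n) = (k : ZMod n) - 1 := by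
          rw [Nat.cast_sub hk]; simp
        rw [h2, h1]; ring
      rcases Nat.even_or_odd n with hev | hod
      · apply case_even n k q s hn hs hev.two_dvd ?_ hq2
        intro h2k
        have : (2 : ℕ) ∣ Nat.gcd n (k - 1) := Nat.dvd_gcd hev.two_dvd h2k
        rw [hg] at this
        norm_num at this
      · have hn2 : n % 2 = 1 := Nat.odd_iff.mp hod
        apply case_odd n k q s (by omega) (by omega) hs ?_ hq2
        rw [Nat.gcd_comm]
        exact hg
    · exact case_diff_ne_one r n k s q hrs he
  · -- the right-hand side is contradictory
    rintro ⟨habs, hcong⟩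
    have hr1 : (r : ℤ) - s = 1 := by
      rcases (abs_eq (by norm_num : (0:ℤ) ≤ 1)).mp habs with h | h
      · exact h
      · have : (s : ℤ) ≤ r := by exact_mod_cast hrs
        omega
    have htype' : (n : ℤ) ∣ 2 * ((k : ℤ) - 1) - q := by
      have := htype
      rw [hr1, mul_one] at this
      exact this.dvd
    have hnk : (n : ℤ) ∣ ((k : ℤ) - 1) := by
      rcases hcong with h | h
      · obtain ⟨a, ha⟩ := h.dvd
        exact ⟨-a, by linarith⟩
      · rw [hr1, mul_one] at h
        obtain ⟨a, ha⟩ := h.dvd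
        obtain ⟨b, hb⟩ := htype'
        exact ⟨a + b, by linarith⟩
    have hnq : (n : ℤ) ∣ (q : ℤ) := by
      obtain ⟨a, ha⟩ := hnk
      obtain ⟨b, hb⟩ := htype'
      exact ⟨2 * a - b, by linarith⟩
    have h6 : n ∣ k - 1 := by
      have : (n:ℤ) ∣ ((k - 1 : ℕ) : ℤ) := by rw [hkc]; exact hnk
      exact_mod_cast this
    have h7 : n ∣ q := by exact_mod_cast hnq
    have h8 : n ∣ Nat.gcd n (Nat.gcd (k - 1) q) :=
      Nat.dvd_gcd dvd_rfl (Nat.dvd_gcd h6 h7)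
    rw [hgcd] at h8
    have := Nat.dvd_one.mp h8
    omega
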